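/- Let k ≥ 1, J = [[0, I_k], [−I_k, 0]] ∈ M_{2k}(ℝ), and Sp_k = { A ∈ GL_{2k}(ℝ) : Aᵀ J A = J }. Define A : ℝˣ → GL_{2k}(ℝ) by A(r) = [[I_k, 0], [0, r·I_k]] (block diagonal). Then A is an injective group homomorphism, each A(r) lies in the normalizer N(Sp_k) and satisfies A(r)ᵀ J A(r) = r·J, and every B ∈ N(Sp_k) admits a unique factorization B = S · A(r) with S ∈ Sp_k and r ∈ ℝˣ. -/

import Mathlib

open Matrix

section helpers
variable {n : Type*} [Fintype n] [DecidableEq n]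

lemma mul_vecMulVec' (A : Matrix n n ℝ) (w v : n → ℝ) :
    A * vecMulVec w v = vecMulVec (A *ᵥ w) v := by
  ext i j
  simp only [Matrix.mul_apply, vecMulVec_apply, Matrix.mulVec, dotProduct]
  rw [Finset.sum_mul]
  exact Finset.sum_congr rfl fun l _ => by ring

lemma vecMulVec_mul' (A : Matrix n n ℝ) (w v : n → ℝ) :
    vecMulVec w v * A = vecMulVec w (v ᵥ* A) := by
  ext i j
  simp [Matrix.mul_apply, vecMulVec_apply, Matrix.vecMul, dotProduct,
    Finset.mul_sum, mul_assoc]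

lemma vecMulVec_mul_vecMulVec' (a b c d : n → ℝ) :
    vecMulVec a b * vecMulVec c d = (b ⬝ᵥ c) • vecMulVec a d := by
  ext i j
  simp [Matrix.mul_apply, vecMulVec_apply, dotProduct]
  rw [Finset.sum_mul]
  exact Finset.sum_congr rfl fun l _ => by ring

lemma vecMulVec_mulVec' (w v x : n → ℝ) :
    vecMulVec w v *ᵥ x = (v ⬝ᵥ x) • w := by
  ext i
  simp only [Matrix.mulVec, vecMulVec_apply, dotProduct, Pi.smul_apply, smul_eq_mul]
  rw [Finset.sum_mul]
  exact Finset.sum_congr rfl fun l _ => by ring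

lemma vecMulVec_transpose' (w v : n → ℝ) : (vecMulVec w v)ᵀ = vecMulVec v w := by
  ext i j; simp [vecMulVec_apply, mul_comm]

lemma eigen_scalar {n : Type*} [Fintype n] [DecidableEq n] [Nonempty n]
    (C : Matrix n n ℝ) (h : ∀ v : n → ℝ, v ≠ 0 → ∃ c : ℝ, C *ᵥ v = c • v) :
    ∃ c : ℝ, C = c • (1 : Matrix n n ℝ) := by
  have hsingle : ∀ i : n, (Pi.single i 1 : n → ℝ) ≠ 0 := by
    intro i hi
    have := congrFun hi i
    simp at this
  choose c hc using fun i : n => h (Pi.single i 1) (hsingle i)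
  have hcc : ∀ i j : n, c i = c j := by
    intro i j
    rcases eq_or_ne i j with rfl | hij
    · rfl
    · have hne : (Pi.single i 1 + Pi.single j 1 : n → ℝ) ≠ 0 := by
        intro hz
        have := congrFun hz i
        simp [Pi.single_apply, hij] at this
      obtain ⟨d, hd⟩ := h _ hne
      rw [Matrix.mulVec_add, hc i, hc j] at hd
      have hi := congrFun hd i
      have hj := congrFun hd j
      simp [Pi.single_apply, hij, Ne.symm hij] at hi hj
      rw [hi, hj]
  obtain ⟨i0⟩ := ‹Nonempty n›
  refine ⟨c i0, ?_⟩
  ext i j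
  have := congrFun (hc j) i
  simp only [Pi.smul_apply, smul_eq_mul] at this
  have hCij : C i j = c j * (Pi.single j 1 : n → ℝ) i := by
    rw [← this]
    simp [Matrix.mulVec, dotProduct, Pi.single_apply]
  rw [hCij, hcc j i0]
  simp [Pi.single_apply, Matrix.one_apply, mul_comm]

end helpers

/-- The standard symplectic matrix `J = [[0, I], [-I, 0]]`. -/
def symplJ (k : ℕ) : Matrix (Fin k ⊕ Fin k) (Fin k ⊕ Fin k) ℝ :=
  Matrix.fromBlocks 0 1 (-1) 0

lemma symplJ_transpose (k : ℕ) : (symplJ k)ᵀ = -symplJ k := by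
  simp [symplJ, Matrix.fromBlocks_transpose, Matrix.fromBlocks_neg]

lemma symplJ_mul_self (k : ℕ) : symplJ k * symplJ k = -1 := by
  simp [symplJ, Matrix.fromBlocks_multiply, ← Matrix.fromBlocks_one, Matrix.fromBlocks_neg]

lemma symplJ_transpose_mul (k : ℕ) : (symplJ k)ᵀ * symplJ k = 1 := by
  rw [symplJ_transpose]
  simp [Matrix.neg_mul, symplJ_mul_self]

lemma neg_symplJ_mul (k : ℕ) : (-symplJ k) * symplJ k = 1 := by
  simp [Matrix.neg_mul, symplJ_mul_self]

lemma symplJ_mul_neg (k : ℕ) : symplJ k * (-symplJ k) = 1 := by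
  simp [Matrix.mul_neg, symplJ_mul_self]

variable {k : ℕ}

lemma dot_symplJ_self (v : Fin k ⊕ Fin k → ℝ) : v ⬝ᵥ (symplJ k *ᵥ v) = 0 := by
  have h1 : v ᵥ* symplJ k = -(symplJ k *ᵥ v) := by
    rw [← Matrix.mulVec_transpose, symplJ_transpose, Matrix.neg_mulVec]
  have h2 : v ⬝ᵥ (symplJ k *ᵥ v) = (v ᵥ* symplJ k) ⬝ᵥ v := Matrix.dotProduct_mulVec v _ v
  rw [h1] at h2
  have h3 : (-(symplJ k *ᵥ v)) ⬝ᵥ v = -(v ⬝ᵥ (symplJ k *ᵥ v)) := by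
    rw [neg_dotProduct, dotProduct_comm]
  rw [h3] at h2
  linarith

lemma vecMul_symplJT_dot (v : Fin k ⊕ Fin k → ℝ) : (v ᵥ* (symplJ k)ᵀ) ⬝ᵥ v = 0 := by
  rw [Matrix.vecMul_transpose, dotProduct_comm]
  exact dot_symplJ_self v

lemma vecMul_symplJ_dot (v : Fin k ⊕ Fin k → ℝ) : (v ᵥ* symplJ k) ⬝ᵥ v = 0 := by
  have : v ᵥ* symplJ k = -(v ᵥ* (symplJ k)ᵀ) := by
    conv_lhs => rw [show symplJ k = -(symplJ k)ᵀ by rw [symplJ_transpose]; simp]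
    simp [Matrix.vecMul_neg]
  rw [this, neg_dotProduct, vecMul_symplJT_dot, neg_zero]

/-- rank-one nilpotent `E_v = v vᵀ Jᵀ`. -/
def spE (k : ℕ) (v : Fin k ⊕ Fin k → ℝ) : Matrix (Fin k ⊕ Fin k) (Fin k ⊕ Fin k) ℝ :=
  vecMulVec v v * (symplJ k)ᵀ

lemma spE_sq (v : Fin k ⊕ Fin k → ℝ) : spE k v * spE k v = 0 := by
  unfold spE
  have key : vecMulVec v v * (symplJ k)ᵀ * vecMulVec v v = 0 := by
    rw [vecMulVec_mul', vecMulVec_mul_vecMulVec', vecMul_symplJT_dot]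
    simp
  calc vecMulVec v v * (symplJ k)ᵀ * (vecMulVec v v * (symplJ k)ᵀ)
      = (vecMulVec v v * (symplJ k)ᵀ * vecMulVec v v) * (symplJ k)ᵀ := by noncomm_ring
    _ = 0 := by rw [key, Matrix.zero_mul]

lemma spE_transpose (v : Fin k ⊕ Fin k → ℝ) : (spE k v)ᵀ = symplJ k * vecMulVec v v := by
  unfold spE
  rw [Matrix.transpose_mul, Matrix.transpose_transpose, vecMulVec_transpose']

lemma transvec_symp (v : Fin k ⊕ Fin k → ℝ) :
    (1 + spE k v)ᵀ * symplJ k * (1 + spE k v) = symplJ k := by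
  have ht : (1 + spE k v)ᵀ = 1 + (spE k v)ᵀ := by rw [Matrix.transpose_add, Matrix.transpose_one]
  rw [ht, spE_transpose]
  have expand : (1 + symplJ k * vecMulVec v v) * symplJ k * (1 + spE k v) =
      symplJ k + (symplJ k * vecMulVec v v * symplJ k + symplJ k * spE k v)
        + symplJ k * vecMulVec v v * symplJ k * spE k v := by
    unfold spE; noncomm_ring
  rw [expand]
  have h1 : symplJ k * spE k v = -(symplJ k * vecMulVec v v * symplJ k) := by
    unfold spE
    rw [symplJ_transpose]
    simp [Matrix.mul_neg, Matrix.mul_assoc]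
  have h2 : symplJ k * vecMulVec v v * symplJ k * spE k v = 0 := by
    unfold spE
    calc symplJ k * vecMulVec v v * symplJ k * (vecMulVec v v * (symplJ k)ᵀ)
        = symplJ k * (vecMulVec v v * symplJ k * vecMulVec v v) * (symplJ k)ᵀ := by
          noncomm_ring
      _ = 0 := by
          rw [vecMulVec_mul', vecMulVec_mul_vecMulVec', vecMul_symplJ_dot]
          simp
  rw [h1, h2]
  abel


/-- The symplectic group `Sp_k = { A ∈ GL_{2k}(ℝ) : Aᵀ J A = J }` as a subgroup
of `GL_{2k}(ℝ)`. -/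
def SpGroup (k : ℕ) : Subgroup (GL (Fin k ⊕ Fin k) ℝ) where
  carrier := {A | (A : Matrix (Fin k ⊕ Fin k) (Fin k ⊕ Fin k) ℝ)ᵀ * symplJ k *
    (A : Matrix (Fin k ⊕ Fin k) (Fin k ⊕ Fin k) ℝ) = symplJ k}
  one_mem' := by simp
  mul_mem' := by
    intro a b ha hb
    simp only [Set.mem_setOf_eq] at *
    set M := (a : Matrix (Fin k ⊕ Fin k) (Fin k ⊕ Fin k) ℝ)
    set N := (b : Matrix (Fin k ⊕ Fin k) (Fin k ⊕ Fin k) ℝ)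
    have : ((a * b : GL (Fin k ⊕ Fin k) ℝ) : Matrix (Fin k ⊕ Fin k) (Fin k ⊕ Fin k) ℝ)
        = M * N := rfl
    rw [this, Matrix.transpose_mul]
    calc Nᵀ * Mᵀ * symplJ k * (M * N) = Nᵀ * (Mᵀ * symplJ k * M) * N := by noncomm_ring
      _ = Nᵀ * symplJ k * N := by rw [ha]
      _ = symplJ k := hb
  inv_mem' := by
    intro a ha
    simp only [Set.mem_setOf_eq] at *
    set M := (a : Matrix (Fin k ⊕ Fin k) (Fin k ⊕ Fin k) ℝ)
    set N := ((a⁻¹ : GL (Fin k ⊕ Fin k) ℝ) : Matrix (Fin k ⊕ Fin k) (Fin k ⊕ Fin k) ℝ)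
    have hMN : M * N = 1 := a.mul_inv
    have h1 : Nᵀ * (Mᵀ * symplJ k * M) * N = (M * N)ᵀ * symplJ k * (M * N) := by
      rw [Matrix.transpose_mul]; noncomm_ring
    rw [ha, hMN] at h1
    simpa using h1

lemma mem_SpGroup_iff (S : GL (Fin k ⊕ Fin k) ℝ) :
    S ∈ SpGroup k ↔ (S : Matrix (Fin k ⊕ Fin k) (Fin k ⊕ Fin k) ℝ)ᵀ * symplJ k *
      (S : Matrix (Fin k ⊕ Fin k) (Fin k ⊕ Fin k) ℝ) = symplJ k := Iff.rfl

/-- Symplectic transvection as a GL element. -/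
noncomputable def transvec (k : ℕ) (v : Fin k ⊕ Fin k → ℝ) : GL (Fin k ⊕ Fin k) ℝ where
  val := 1 + spE k v
  inv := 1 - spE k v
  val_inv := by
    have : (1 + spE k v) * (1 - spE k v) = 1 - spE k v * spE k v := by noncomm_ring
    rw [this, spE_sq, sub_zero]
  inv_val := by
    have : (1 - spE k v) * (1 + spE k v) = 1 - spE k v * spE k v := by noncomm_ring
    rw [this, spE_sq, sub_zero]

lemma transvec_mem (v : Fin k ⊕ Fin k → ℝ) : transvec k v ∈ SpGroup k := by
  rw [mem_SpGroup_iff]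
  exact transvec_symp v

/-- Conjugation by a matrix scaling J preserves the symplectic group. -/
lemma conj_mem (P : GL (Fin k ⊕ Fin k) ℝ) (c : ℝ) (hc : c ≠ 0)
    (hP : (P : Matrix (Fin k ⊕ Fin k) (Fin k ⊕ Fin k) ℝ)ᵀ * symplJ k *
      (P : Matrix (Fin k ⊕ Fin k) (Fin k ⊕ Fin k) ℝ) = c • symplJ k)
    (S : GL (Fin k ⊕ Fin k) ℝ) (hS : S ∈ SpGroup k) : P * S * P⁻¹ ∈ SpGroup k := by
  set Pm := (P : Matrix (Fin k ⊕ Fin k) (Fin k ⊕ Fin k) ℝ) with hPm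
  set Pi := ((P⁻¹ : GL (Fin k ⊕ Fin k) ℝ) : Matrix (Fin k ⊕ Fin k) (Fin k ⊕ Fin k) ℝ) with hPi
  set Sm := (S : Matrix (Fin k ⊕ Fin k) (Fin k ⊕ Fin k) ℝ) with hSm
  have hPP : Pm * Pi = 1 := P.mul_inv
  have hPP' : Pi * Pm = 1 := P.inv_mul
  have hPPt : Piᵀ * Pmᵀ = 1 := by rw [← Matrix.transpose_mul, hPP, Matrix.transpose_one]
  have hPPt' : Pmᵀ * Piᵀ = 1 := by rw [← Matrix.transpose_mul, hPP', Matrix.transpose_one]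
  -- inverse scaling
  have hPinv : Piᵀ * symplJ k * Pi = c⁻¹ • symplJ k := by
    have e1 : Piᵀ * (Pmᵀ * symplJ k * Pm) * Pi = (Piᵀ * Pmᵀ) * symplJ k * (Pm * Pi) := by
      noncomm_ring
    rw [hP, hPPt, hPP, Matrix.one_mul, Matrix.mul_one] at e1
    have e2 : Piᵀ * (c • symplJ k) * Pi = c • (Piᵀ * symplJ k * Pi) := by
      rw [Matrix.mul_smul, Matrix.smul_mul]
    rw [e2] at e1
    have := congrArg (fun X => c⁻¹ • X) e1
    have := this.symm
    simp only [smul_smul, inv_mul_cancel₀ hc, one_smul] at this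
    exact this.symm
  rw [mem_SpGroup_iff] at hS ⊢
  have hcoe : ((P * S * P⁻¹ : GL (Fin k ⊕ Fin k) ℝ) :
      Matrix (Fin k ⊕ Fin k) (Fin k ⊕ Fin k) ℝ) = Pm * Sm * Pi := rfl
  rw [hcoe]
  have expand : (Pm * Sm * Pi)ᵀ * symplJ k * (Pm * Sm * Pi)
      = Piᵀ * (Smᵀ * (Pmᵀ * symplJ k * Pm) * Sm) * Pi := by
    rw [Matrix.transpose_mul, Matrix.transpose_mul]; noncomm_ring
  rw [expand, hP]
  have e3 : Smᵀ * (c • symplJ k) * Sm = c • (Smᵀ * symplJ k * Sm) := by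
    rw [Matrix.mul_smul, Matrix.smul_mul]
  rw [e3, hS]
  have e4 : Piᵀ * (c • symplJ k) * Pi = c • (Piᵀ * symplJ k * Pi) := by
    rw [Matrix.mul_smul, Matrix.smul_mul]
  rw [e4, hPinv, smul_smul, mul_inv_cancel₀ hc, one_smul]

lemma symplJ_entry (hk : 1 ≤ k) :
    symplJ k (Sum.inl ⟨0, hk⟩) (Sum.inr ⟨0, hk⟩) = 1 := by
  simp [symplJ, Matrix.fromBlocks_apply₁₂]

lemma symplJ_ne_zero (hk : 1 ≤ k) : symplJ k ≠ 0 := by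
  intro h
  have := congrFun (congrFun h (Sum.inl ⟨0, hk⟩)) (Sum.inr ⟨0, hk⟩)
  rw [symplJ_entry hk] at this
  simpa using this

lemma normalizer_scale (hk : 1 ≤ k) (B : GL (Fin k ⊕ Fin k) ℝ)
    (hB : B ∈ Subgroup.normalizer ((SpGroup k : Set (GL (Fin k ⊕ Fin k) ℝ)))) :
    ∃ c : ℝ, c ≠ 0 ∧ (B : Matrix (Fin k ⊕ Fin k) (Fin k ⊕ Fin k) ℝ)ᵀ * symplJ k *
      (B : Matrix (Fin k ⊕ Fin k) (Fin k ⊕ Fin k) ℝ) = c • symplJ k := by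
  set Bm := (B : Matrix (Fin k ⊕ Fin k) (Fin k ⊕ Fin k) ℝ) with hBm
  set Bi := ((B⁻¹ : GL (Fin k ⊕ Fin k) ℝ) : Matrix (Fin k ⊕ Fin k) (Fin k ⊕ Fin k) ℝ) with hBi
  have hBB : Bm * Bi = 1 := B.mul_inv
  have hBB' : Bi * Bm = 1 := B.inv_mul
  have hBBt : Biᵀ * Bmᵀ = 1 := by rw [← Matrix.transpose_mul, hBB, Matrix.transpose_one]
  have hBBt' : Bmᵀ * Biᵀ = 1 := by rw [← Matrix.transpose_mul, hBB', Matrix.transpose_one]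
  set M := Biᵀ * symplJ k * Bi with hM
  -- invariance of M under transvections
  have step1 : ∀ v : Fin k ⊕ Fin k → ℝ,
      (1 + spE k v)ᵀ * M * (1 + spE k v) = M := by
    intro v
    have hmem := (Subgroup.mem_normalizer_iff''.mp hB (transvec k v)).mp (transvec_mem v)
    rw [mem_SpGroup_iff] at hmem
    have hcoe : ((B⁻¹ * transvec k v * B : GL (Fin k ⊕ Fin k) ℝ) :
        Matrix (Fin k ⊕ Fin k) (Fin k ⊕ Fin k) ℝ) = Bi * (1 + spE k v) * Bm := rfl
    rw [hcoe] at hmem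
    set T := 1 + spE k v with hT
    have e : Biᵀ * ((Bi * T * Bm)ᵀ * symplJ k * (Bi * T * Bm)) * Bi
        = (Biᵀ * Bmᵀ) * (Tᵀ * (Biᵀ * symplJ k * Bi) * T) * (Bm * Bi) := by
      simp only [Matrix.transpose_mul]
      noncomm_ring
    rw [hmem, hBBt, hBB, Matrix.one_mul, Matrix.mul_one] at e
    exact e.symm
  -- commutation of C := -J * M with the spE's
  set C := (-symplJ k) * M with hC
  have step2 : ∀ v : Fin k ⊕ Fin k → ℝ, C * spE k v = spE k v * C := by
    intro v
    set T := 1 + spE k v with hT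
    set Ti := 1 - spE k v with hTi
    have hTTi : T * Ti = 1 := by
      have : T * Ti = 1 - spE k v * spE k v := by rw [hT, hTi]; noncomm_ring
      rw [this, spE_sq, sub_zero]
    have hTJT : Tᵀ * symplJ k * T = symplJ k := transvec_symp v
    have hTt : Tᵀ = symplJ k * Ti * (-symplJ k) := by
      have e1 : Tᵀ * symplJ k * (T * Ti) = symplJ k * Ti := by
        rw [← Matrix.mul_assoc, hTJT]
      rw [hTTi, Matrix.mul_one] at e1
      have e2 := congrArg (fun X => X * (-symplJ k)) e1
      simp only [Matrix.mul_assoc, symplJ_mul_neg, Matrix.mul_one] at e2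
      rw [e2]
      rw [Matrix.mul_assoc]
    have hstep := step1 v
    rw [← hT, hTt] at hstep
    -- J * Ti * (-J) * M * T = M ; multiply on left by -J
    have e3 := congrArg (fun X => (-symplJ k) * X) hstep
    have e4 : (-symplJ k) * (symplJ k * Ti * (-symplJ k) * M * T)
        = ((-symplJ k) * symplJ k) * (Ti * ((-symplJ k) * M) * T) := by noncomm_ring
    rw [e4, neg_symplJ_mul, Matrix.one_mul] at e3
    -- Ti * C * T = C ; multiply on left by T
    have e5 := congrArg (fun X => T * X) e3
    have e6 : T * (Ti * ((-symplJ k) * M) * T) = (T * Ti) * ((-symplJ k) * M) * T := by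
      noncomm_ring
    rw [e6, hTTi, Matrix.one_mul] at e5
    -- e5 : C * T = T * C
    have e7 : C * T = T * C := by rw [hC]; exact e5
    rw [hT] at e7
    have : C * 1 + C * spE k v = 1 * C + spE k v * C := by
      rw [← Matrix.mul_add, ← Matrix.add_mul]; exact e7
    simpa using this
  -- C is scalar
  have step3 : ∀ v : Fin k ⊕ Fin k → ℝ, v ≠ 0 → ∃ a : ℝ, C *ᵥ v = a • v := by
    intro v hv
    have h := step2 v
    rw [spE] at h
    have e1 := congrArg (fun X => X * symplJ k) h
    have e2 : C * (vecMulVec v v * (symplJ k)ᵀ) * symplJ k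
        = C * vecMulVec v v * ((symplJ k)ᵀ * symplJ k) := by noncomm_ring
    have e3 : vecMulVec v v * (symplJ k)ᵀ * C * symplJ k
        = vecMulVec v v * ((symplJ k)ᵀ * C * symplJ k) := by noncomm_ring
    rw [e2, e3, symplJ_transpose_mul, Matrix.mul_one] at e1
    set D := (symplJ k)ᵀ * C * symplJ k with hD
    have key : (v ⬝ᵥ v) • (C *ᵥ v) = (v ⬝ᵥ (D *ᵥ v)) • v := by
      calc (v ⬝ᵥ v) • (C *ᵥ v) = C *ᵥ ((v ⬝ᵥ v) • v) := by rw [Matrix.mulVec_smul]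
        _ = C *ᵥ (vecMulVec v v *ᵥ v) := by rw [vecMulVec_mulVec']
        _ = (C * vecMulVec v v) *ᵥ v := by rw [Matrix.mulVec_mulVec]
        _ = (vecMulVec v v * D) *ᵥ v := by rw [e1]
        _ = vecMulVec v v *ᵥ (D *ᵥ v) := by rw [Matrix.mulVec_mulVec]
        _ = (v ⬝ᵥ (D *ᵥ v)) • v := by rw [vecMulVec_mulVec']
    have htne : v ⬝ᵥ v ≠ 0 := fun h0 => hv (dotProduct_self_eq_zero.mp h0)
    refine ⟨(v ⬝ᵥ v)⁻¹ * (v ⬝ᵥ (D *ᵥ v)), ?_⟩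
    have := congrArg (fun X => (v ⬝ᵥ v)⁻¹ • X) key
    simp only [smul_smul, inv_mul_cancel₀ htne, one_smul] at this
    rw [this]
  have : Nonempty (Fin k ⊕ Fin k) := ⟨Sum.inl ⟨0, hk⟩⟩
  obtain ⟨a, ha⟩ := eigen_scalar C step3
  -- M = a • J
  have hMa : M = a • symplJ k := by
    have : symplJ k * C = M := by
      rw [hC, ← Matrix.mul_assoc, symplJ_mul_neg, Matrix.one_mul]
    rw [← this, ha, Matrix.mul_smul, Matrix.mul_one]
  -- transfer back to Bm
  have e8 : Bmᵀ * M * Bm = symplJ k := by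
    rw [hM]
    calc Bmᵀ * (Biᵀ * symplJ k * Bi) * Bm
        = (Bmᵀ * Biᵀ) * symplJ k * (Bi * Bm) := by noncomm_ring
      _ = symplJ k := by rw [hBBt', hBB', Matrix.one_mul, Matrix.mul_one]
  rw [hMa] at e8
  have e9 : Bmᵀ * (a • symplJ k) * Bm = a • (Bmᵀ * symplJ k * Bm) := by
    rw [Matrix.mul_smul, Matrix.smul_mul]
  rw [e9] at e8
  have hane : a ≠ 0 := by
    intro h0
    rw [h0, zero_smul] at e8
    exact symplJ_ne_zero hk e8.symm
  refine ⟨a⁻¹, inv_ne_zero hane, ?_⟩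
  have := congrArg (fun X => a⁻¹ • X) e8
  simp only [smul_smul, inv_mul_cancel₀ hane, one_smul] at this
  exact this


/-- The block-diagonal matrix `A(r) = [[I, 0], [0, r·I]]` as an element of
`GL_{2k}(ℝ)`. -/
noncomputable def spSplitting (k : ℕ) (r : ℝˣ) : GL (Fin k ⊕ Fin k) ℝ where
  val := Matrix.fromBlocks 1 0 0 ((r : ℝ) • 1)
  inv := Matrix.fromBlocks 1 0 0 (((r⁻¹ : ℝˣ) : ℝ) • 1)
  val_inv := by
    simp [Matrix.fromBlocks_multiply, Matrix.smul_mul, Matrix.mul_smul, smul_smul,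
      ← Matrix.fromBlocks_one]
  inv_val := by
    simp [Matrix.fromBlocks_multiply, Matrix.smul_mul, Matrix.mul_smul, smul_smul,
      ← Matrix.fromBlocks_one]

lemma spSplitting_val (r : ℝˣ) :
    ((spSplitting k r : GL (Fin k ⊕ Fin k) ℝ) : Matrix (Fin k ⊕ Fin k) (Fin k ⊕ Fin k) ℝ)
      = Matrix.fromBlocks 1 0 0 ((r : ℝ) • 1) := rfl

lemma spSplitting_inv (r : ℝˣ) : (spSplitting k r)⁻¹ = spSplitting k r⁻¹ :=
  Units.ext rfl

lemma spSplitting_scale (r : ℝˣ) :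
    ((spSplitting k r : GL (Fin k ⊕ Fin k) ℝ) :
        Matrix (Fin k ⊕ Fin k) (Fin k ⊕ Fin k) ℝ)ᵀ * symplJ k *
      ((spSplitting k r : GL (Fin k ⊕ Fin k) ℝ) :
        Matrix (Fin k ⊕ Fin k) (Fin k ⊕ Fin k) ℝ) = (r : ℝ) • symplJ k := by
  rw [spSplitting_val, symplJ]
  simp [Matrix.fromBlocks_transpose, Matrix.fromBlocks_multiply, Matrix.fromBlocks_smul,
    Matrix.smul_mul, Matrix.mul_smul, Matrix.transpose_smul]

lemma smul_symplJ_inj (hk : 1 ≤ k) {a b : ℝ} (h : a • symplJ k = b • symplJ k) : a = b := by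
  have := congrFun (congrFun h (Sum.inl ⟨0, hk⟩)) (Sum.inr ⟨0, hk⟩)
  simpa [symplJ_entry hk] using this

lemma spSplitting_mem_normalizer (r : ℝˣ) :
    spSplitting k r ∈ Subgroup.normalizer ((SpGroup k : Set (GL (Fin k ⊕ Fin k) ℝ))) := by
  rw [Subgroup.mem_normalizer_iff]
  intro h
  constructor
  · intro hh
    exact conj_mem (spSplitting k r) (r : ℝ) r.ne_zero (spSplitting_scale r) h hh
  · intro hh
    have h2 := conj_mem (spSplitting k r)⁻¹ ((r⁻¹ : ℝˣ) : ℝ) (r⁻¹).ne_zero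
      (by rw [spSplitting_inv]; exact spSplitting_scale r⁻¹) _ hh
    have : (spSplitting k r)⁻¹ * (spSplitting k r * h * (spSplitting k r)⁻¹) *
        ((spSplitting k r)⁻¹)⁻¹ = h := by group
    rwa [this] at h2

/-- Splitting and semidirect product decomposition in the paper's Lemma 5.2
(lem:N(Sp)): `r ↦ [[I, 0], [0, r·I]]` is an injective group homomorphism into
the normalizer of `Sp_k` satisfying `A(r)ᵀ J A(r) = r·J`, and every element of
`N(Sp_k)` factors uniquely as `S·A(r)` with `S ∈ Sp_k` and `r ∈ ℝˣ`. -/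
theorem sp_normalizer_splitting (k : ℕ) (hk : 1 ≤ k) :
    Function.Injective (spSplitting k) ∧
    (∀ r s : ℝˣ, spSplitting k (r * s) = spSplitting k r * spSplitting k s) ∧
    (∀ r : ℝˣ, spSplitting k r ∈ Subgroup.normalizer ((SpGroup k : Set (GL (Fin k ⊕ Fin k) ℝ)))) ∧
    (∀ r : ℝˣ,
      ((spSplitting k r : GL (Fin k ⊕ Fin k) ℝ) :
          Matrix (Fin k ⊕ Fin k) (Fin k ⊕ Fin k) ℝ)ᵀ * symplJ k *
        ((spSplitting k r : GL (Fin k ⊕ Fin k) ℝ) :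
          Matrix (Fin k ⊕ Fin k) (Fin k ⊕ Fin k) ℝ) = (r : ℝ) • symplJ k) ∧
    ∀ B ∈ Subgroup.normalizer ((SpGroup k : Set (GL (Fin k ⊕ Fin k) ℝ))),
      ∃! p : GL (Fin k ⊕ Fin k) ℝ × ℝˣ,
        p.1 ∈ SpGroup k ∧ B = p.1 * spSplitting k p.2 := by
  refine ⟨?_, ?_, fun r => spSplitting_mem_normalizer r, fun r => spSplitting_scale r, ?_⟩
  · -- injectivity
    intro r s hrs
    have h := congrArg (fun (u : GL (Fin k ⊕ Fin k) ℝ) =>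
      (u : Matrix (Fin k ⊕ Fin k) (Fin k ⊕ Fin k) ℝ)) hrs
    simp only [spSplitting_val] at h
    have := congrFun (congrFun h (Sum.inr ⟨0, hk⟩)) (Sum.inr ⟨0, hk⟩)
    simp [Matrix.fromBlocks_apply₂₂, Matrix.one_apply] at this
    exact Units.ext this
  · -- homomorphism
    intro r s
    apply Units.ext
    show (Matrix.fromBlocks 1 0 0 (((r * s : ℝˣ) : ℝ) • 1) :
        Matrix (Fin k ⊕ Fin k) (Fin k ⊕ Fin k) ℝ)
      = Matrix.fromBlocks 1 0 0 ((r : ℝ) • 1) * Matrix.fromBlocks 1 0 0 ((s : ℝ) • 1)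
    simp [Matrix.fromBlocks_multiply, Matrix.smul_mul, Matrix.mul_smul, smul_smul, mul_comm]
  · -- factorization
    intro B hB
    obtain ⟨c, hc, hscale⟩ := normalizer_scale hk B hB
    set r : ℝˣ := Units.mk0 c hc with hr
    have hscale' : (B : Matrix (Fin k ⊕ Fin k) (Fin k ⊕ Fin k) ℝ)ᵀ * symplJ k *
        (B : Matrix (Fin k ⊕ Fin k) (Fin k ⊕ Fin k) ℝ) = (r : ℝ) • symplJ k := hscale
    refine ⟨(B * (spSplitting k r)⁻¹, r), ⟨?_, by rw [inv_mul_cancel_right]⟩, ?_⟩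
    · -- membership in Sp
      rw [mem_SpGroup_iff]
      set Bm := (B : Matrix (Fin k ⊕ Fin k) (Fin k ⊕ Fin k) ℝ) with hBm
      have hcoe : ((B * (spSplitting k r)⁻¹ : GL (Fin k ⊕ Fin k) ℝ) :
          Matrix (Fin k ⊕ Fin k) (Fin k ⊕ Fin k) ℝ)
          = Bm * ((spSplitting k r⁻¹ : GL (Fin k ⊕ Fin k) ℝ) :
            Matrix (Fin k ⊕ Fin k) (Fin k ⊕ Fin k) ℝ) := by
        rw [← spSplitting_inv]; rfl
      set Ai := ((spSplitting k r⁻¹ : GL (Fin k ⊕ Fin k) ℝ) :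
        Matrix (Fin k ⊕ Fin k) (Fin k ⊕ Fin k) ℝ) with hAi
      rw [hcoe]
      have expand : (Bm * Ai)ᵀ * symplJ k * (Bm * Ai)
          = Aiᵀ * (Bmᵀ * symplJ k * Bm) * Ai := by
        rw [Matrix.transpose_mul]; noncomm_ring
      rw [expand, hscale']
      have e1 : Aiᵀ * ((r : ℝ) • symplJ k) * Ai = (r : ℝ) • (Aiᵀ * symplJ k * Ai) := by
        rw [Matrix.mul_smul, Matrix.smul_mul]
      rw [e1, spSplitting_scale r⁻¹, smul_smul]
      norm_num
    · -- uniqueness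
      rintro ⟨S', r'⟩ ⟨hS', hB'⟩
      have hrr : r' = r := by
        have hcoe' : (B : Matrix (Fin k ⊕ Fin k) (Fin k ⊕ Fin k) ℝ)
            = (S' : Matrix (Fin k ⊕ Fin k) (Fin k ⊕ Fin k) ℝ) *
              ((spSplitting k r' : GL (Fin k ⊕ Fin k) ℝ) :
                Matrix (Fin k ⊕ Fin k) (Fin k ⊕ Fin k) ℝ) := by rw [hB']; rfl
        set Sm := (S' : Matrix (Fin k ⊕ Fin k) (Fin k ⊕ Fin k) ℝ) with hSm
        set Am := ((spSplitting k r' : GL (Fin k ⊕ Fin k) ℝ) :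
          Matrix (Fin k ⊕ Fin k) (Fin k ⊕ Fin k) ℝ) with hAm
        have e2 : (Sm * Am)ᵀ * symplJ k * (Sm * Am)
            = Amᵀ * (Smᵀ * symplJ k * Sm) * Am := by
          rw [Matrix.transpose_mul]; noncomm_ring
        rw [mem_SpGroup_iff] at hS'
        have e3 : (B : Matrix (Fin k ⊕ Fin k) (Fin k ⊕ Fin k) ℝ)ᵀ * symplJ k *
            (B : Matrix (Fin k ⊕ Fin k) (Fin k ⊕ Fin k) ℝ) = (r' : ℝ) • symplJ k := by
          rw [hcoe', e2, hS']
          exact spSplitting_scale r'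
        rw [hscale'] at e3
        exact Units.ext (smul_symplJ_inj hk e3.symm)
      have hS'eq : S' = B * (spSplitting k r)⁻¹ := by
        rw [hB', hrr, mul_inv_cancel_right]
      exact Prod.ext hS'eq hrr
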